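/- Let P, Q be Borel probability measures on ℝ with finite second moments, with cumulative distribution functions F and G and generalized inverses F⁻, G⁻. Let μ⁺ be the pushforward of Lebesgue measure on (0,1) under the map u ↦ (F⁻(u), G⁻(u)) (the comonotone coupling). Then μ⁺ ∈ M(P,Q) and ∬ xy dμ⁺(x,y) = sup_{μ ∈ M(P,Q)} ∬ xy dμ(x,y). -/

import Mathlib

open MeasureTheory

open ProbabilityTheory Set Filter Topology

noncomputable def qf (P : Measure ℝ) (ξ : ℝ) : ℝ := sInf {x : ℝ | ξ ≤ cdf P x}

lemma qf_nonempty (P : Measure ℝ) {ξ : ℝ} (h1 : ξ < 1) :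
    {x : ℝ | ξ ≤ cdf P x}.Nonempty := by
  have := (tendsto_cdf_atTop P).eventually (eventually_gt_nhds h1)
  rcases this.exists with ⟨x, hx⟩
  exact ⟨x, hx.le⟩

lemma qf_bddBelow (P : Measure ℝ) {ξ : ℝ} (h0 : 0 < ξ) :
    BddBelow {x : ℝ | ξ ≤ cdf P x} := by
  have := (tendsto_cdf_atBot P).eventually (eventually_lt_nhds h0)
  rcases this.exists with ⟨x₀, hx₀⟩
  refine ⟨x₀, fun y hy => ?_⟩
  by_contra hc
  push_neg at hc
  exact absurd (le_trans hy ((monotone_cdf P) hc.le)) (not_le.2 hx₀)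

lemma qf_mem (P : Measure ℝ) {ξ : ℝ} (h0 : 0 < ξ) (h1 : ξ < 1) :
    ξ ≤ cdf P (qf P ξ) := by
  set S := {x : ℝ | ξ ≤ cdf P x}
  have hne := qf_nonempty P h1
  have hbd := qf_bddBelow P h0
  have key : ∀ x, qf P ξ < x → ξ ≤ cdf P x := by
    intro x hx
    rcases (csInf_lt_iff hbd hne).1 hx with ⟨a, ha, hax⟩
    exact le_trans ha ((monotone_cdf P) hax.le)
  have htd : Tendsto (cdf P) (𝓝[>] (qf P ξ)) (𝓝 (cdf P (qf P ξ))) :=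
    ((cdf P).right_continuous _).tendsto.mono_left (nhdsWithin_mono _ Ioi_subset_Ici_self)
  exact ge_of_tendsto htd (eventually_mem_nhdsWithin.mono fun x hx => key x hx)

lemma qf_le_iff (P : Measure ℝ) {ξ : ℝ} (h0 : 0 < ξ) (h1 : ξ < 1) (x : ℝ) :
    qf P ξ ≤ x ↔ ξ ≤ cdf P x := by
  constructor
  · intro h
    exact le_trans (qf_mem P h0 h1) ((monotone_cdf P) h)
  · intro h
    exact csInf_le (qf_bddBelow P h0) h

lemma lt_qf_iff (P : Measure ℝ) {ξ : ℝ} (h0 : 0 < ξ) (h1 : ξ < 1) (s : ℝ) :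
    s < qf P ξ ↔ cdf P s < ξ := by
  rw [← not_le, ← not_le, not_iff_not, qf_le_iff P h0 h1]

lemma qf_monotoneOn (P : Measure ℝ) : MonotoneOn (qf P) (Ioo (0:ℝ) 1) := by
  intro a ha b hb hab
  rw [qf_le_iff P ha.1 ha.2]
  exact le_trans hab (qf_mem P hb.1 hb.2)

lemma qf_aemeasurable (P : Measure ℝ) :
    AEMeasurable (qf P) (volume.restrict (Ioo (0:ℝ) 1)) :=
  aemeasurable_restrict_of_monotoneOn measurableSet_Ioo (qf_monotoneOn P)

lemma map_qf (P : Measure ℝ) [IsProbabilityMeasure P] :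
    (volume.restrict (Ioo (0:ℝ) 1)).map (qf P) = P := by
  have hmap : IsProbabilityMeasure ((volume.restrict (Ioo (0:ℝ) 1)).map (qf P)) := by
    constructor
    rw [Measure.map_apply_of_aemeasurable (qf_aemeasurable P) MeasurableSet.univ]
    simp [Real.volume_Ioo]
  refine Measure.ext_of_Iic _ _ (fun x => ?_)
  rw [Measure.map_apply_of_aemeasurable (qf_aemeasurable P) measurableSet_Iic,
    Measure.restrict_apply' measurableSet_Ioo]
  have hset : qf P ⁻¹' Iic x ∩ Ioo (0:ℝ) 1 = Iic (cdf P x) ∩ Ioo (0:ℝ) 1 := by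
    ext u
    simp only [mem_inter_iff, mem_preimage, mem_Iic, mem_Ioo, and_congr_left_iff]
    intro hu
    rw [qf_le_iff P hu.1 hu.2]
  rw [hset]
  have h0 : (0:ℝ) ≤ cdf P x := cdf_nonneg (μ := P) x
  have h1 : cdf P x ≤ 1 := cdf_le_one (μ := P) x
  rw [← ofReal_cdf]
  rcases lt_or_eq_of_le h1 with hlt | heq
  · have : Iic (cdf P x) ∩ Ioo (0:ℝ) 1 = Ioc 0 (cdf P x) := by
      ext u
      simp only [mem_inter_iff, mem_Iic, mem_Ioo, mem_Ioc]
      constructor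
      · rintro ⟨h, h2, _⟩; exact ⟨h2, h⟩
      · rintro ⟨h2, h⟩; exact ⟨h, h2, lt_of_le_of_lt h hlt⟩
    rw [this, Real.volume_Ioc, sub_zero]
  · have : Iic (cdf P x) ∩ Ioo (0:ℝ) 1 = Ioo (0:ℝ) 1 := by
      rw [inter_eq_right]
      intro u hu
      simp only [mem_Iic]
      exact heq ▸ hu.2.le
    rw [this, Real.volume_Ioo, ← heq]
    norm_num

lemma pair_aemeasurable (P Q : Measure ℝ) :
    AEMeasurable (fun u => (qf P u, qf Q u)) (volume.restrict (Ioo (0:ℝ) 1)) :=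
  (qf_aemeasurable P).prodMk (qf_aemeasurable Q)

lemma muPlus_prob (P Q : Measure ℝ) :
    IsProbabilityMeasure ((volume.restrict (Ioo (0:ℝ) 1)).map (fun u => (qf P u, qf Q u))) := by
  constructor
  rw [Measure.map_apply_of_aemeasurable (pair_aemeasurable P Q) MeasurableSet.univ]
  simp [Real.volume_Ioo]

lemma muPlus_fst (P Q : Measure ℝ) [IsProbabilityMeasure P] :
    ((volume.restrict (Ioo (0:ℝ) 1)).map (fun u => (qf P u, qf Q u))).map Prod.fst = P := by
  rw [AEMeasurable.map_map_of_aemeasurable measurable_fst.aemeasurable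
      (pair_aemeasurable P Q)]
  exact map_qf P

lemma muPlus_snd (P Q : Measure ℝ) [IsProbabilityMeasure Q] :
    ((volume.restrict (Ioo (0:ℝ) 1)).map (fun u => (qf P u, qf Q u))).map Prod.snd = Q := by
  rw [AEMeasurable.map_map_of_aemeasurable measurable_snd.aemeasurable
      (pair_aemeasurable P Q)]
  exact map_qf Q

lemma muPlus_quadrant (P Q : Measure ℝ) (s t : ℝ) :
    ((volume.restrict (Ioo (0:ℝ) 1)).map (fun u => (qf P u, qf Q u)))
      {p : ℝ × ℝ | s < p.1 ∧ t < p.2}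
    = ENNReal.ofReal (1 - max (cdf P s) (cdf Q t)) := by
  have hmeas : MeasurableSet {p : ℝ × ℝ | s < p.1 ∧ t < p.2} :=
    (measurable_fst measurableSet_Ioi).inter (measurable_snd measurableSet_Ioi)
  rw [Measure.map_apply_of_aemeasurable (pair_aemeasurable P Q) hmeas,
    Measure.restrict_apply' measurableSet_Ioo]
  have hset : (fun u => (qf P u, qf Q u)) ⁻¹' {p : ℝ × ℝ | s < p.1 ∧ t < p.2} ∩ Ioo (0:ℝ) 1
      = Ioo (max (cdf P s) (cdf Q t)) 1 := by
    ext u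
    simp only [mem_inter_iff, mem_preimage, mem_setOf_eq, mem_Ioo, max_lt_iff]
    constructor
    · rintro ⟨⟨h1, h2⟩, hu⟩
      exact ⟨⟨(lt_qf_iff P hu.1 hu.2 s).1 h1, (lt_qf_iff Q hu.1 hu.2 t).1 h2⟩, hu.2⟩
    · rintro ⟨⟨h1, h2⟩, hu1⟩
      have hu0 : 0 < u := lt_of_le_of_lt (cdf_nonneg (μ := P) s) h1
      exact ⟨⟨(lt_qf_iff P hu0 hu1 s).2 h1, (lt_qf_iff Q hu0 hu1 t).2 h2⟩, hu0, hu1⟩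
  rw [hset, Real.volume_Ioo]

noncomputable def hh (x s : ℝ) : ℝ :=
  (if s < x then (1:ℝ) else 0) - (if s < 0 then (1:ℝ) else 0)

lemma hh_meas : Measurable (fun q : ℝ × ℝ => hh q.1 q.2) := by
  unfold hh
  apply Measurable.sub
  · exact Measurable.ite (measurableSet_lt measurable_snd measurable_fst)
      measurable_const measurable_const
  · exact Measurable.ite (measurableSet_lt measurable_snd measurable_const)
      measurable_const measurable_const

lemma hh_meas1 (x : ℝ) : Measurable (hh x) :=
  hh_meas.comp (measurable_const.prodMk measurable_id)

lemma hh_eq_nonneg {x : ℝ} (hx : 0 ≤ x) :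
    hh x = (Ico (0:ℝ) x).indicator (fun _ => (1:ℝ)) := by
  funext s
  unfold hh
  rcases lt_or_ge s 0 with hs | hs
  · rw [if_pos hs, if_pos (lt_of_lt_of_le hs hx), indicator_of_notMem (by simp [hs.not_ge])]
    ring
  · rw [if_neg (not_lt.2 hs)]
    rcases lt_or_ge s x with h | h
    · rw [if_pos h, indicator_of_mem (mem_Ico.mpr ⟨hs, h⟩)]; ring
    · rw [if_neg (not_lt.2 h), indicator_of_notMem (by simp [mem_Ico, not_lt.2 h, h])]
      ring

lemma hh_eq_neg {x : ℝ} (hx : x < 0) :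
    hh x = fun s => -((Ico x (0:ℝ)).indicator (fun _ => (1:ℝ)) s) := by
  funext s
  unfold hh
  rcases lt_or_ge s x with hs | hs
  · rw [if_pos hs, if_pos (hs.trans hx), indicator_of_notMem (by simp [hs.not_ge])]
    ring
  · rw [if_neg (not_lt.2 hs)]
    rcases lt_or_ge s 0 with h | h
    · rw [if_pos h, indicator_of_mem (mem_Ico.mpr ⟨hs, h⟩)]; ring
    · rw [if_neg (not_lt.2 h), indicator_of_notMem (by simp [mem_Ico, not_lt.2 h])]
      ring

lemma integrable_hh (x : ℝ) : Integrable (hh x) (volume : Measure ℝ) := by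
  rcases le_or_gt 0 x with hx | hx
  · rw [hh_eq_nonneg hx]
    rw [integrable_indicator_iff measurableSet_Ico]
    exact integrableOn_const (ne_of_lt (by rw [Real.volume_Ico]; exact ENNReal.ofReal_lt_top))
  · rw [hh_eq_neg hx]
    apply Integrable.neg
    rw [integrable_indicator_iff measurableSet_Ico]
    exact integrableOn_const (ne_of_lt (by rw [Real.volume_Ico]; exact ENNReal.ofReal_lt_top))

lemma integral_hh (x : ℝ) : ∫ s, hh x s ∂(volume : Measure ℝ) = x := by
  rcases le_or_gt 0 x with hx | hx
  · rw [hh_eq_nonneg hx, integral_indicator_const _ measurableSet_Ico, measureReal_def, Real.volume_Ico,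
      sub_zero, ENNReal.toReal_ofReal hx, smul_eq_mul, mul_one]
  · rw [hh_eq_neg hx, integral_neg, integral_indicator_const _ measurableSet_Ico, measureReal_def,
      Real.volume_Ico, ENNReal.toReal_ofReal (by linarith : (0:ℝ) ≤ 0 - x), smul_eq_mul,
      mul_one]
    ring

lemma integral_abs_hh (x : ℝ) : ∫ s, |hh x s| ∂(volume : Measure ℝ) = |x| := by
  rcases le_or_gt 0 x with hx | hx
  · rw [hh_eq_nonneg hx]
    have : (fun s => |(Ico (0:ℝ) x).indicator (fun _ => (1:ℝ)) s|)
        = (Ico (0:ℝ) x).indicator (fun _ => (1:ℝ)) := by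
      funext s
      rcases em (s ∈ Ico (0:ℝ) x) with h | h <;> simp [indicator_of_mem, h]
    rw [this, integral_indicator_const _ measurableSet_Ico, measureReal_def, Real.volume_Ico, sub_zero,
      ENNReal.toReal_ofReal hx, smul_eq_mul, mul_one, abs_of_nonneg hx]
  · rw [hh_eq_neg hx]
    have : (fun s => |(-((Ico x (0:ℝ)).indicator (fun _ => (1:ℝ)) s))|)
        = (Ico x (0:ℝ)).indicator (fun _ => (1:ℝ)) := by
      funext s
      rcases em (s ∈ Ico x (0:ℝ)) with h | h <;> simp [indicator_of_mem, h]
    rw [this, integral_indicator_const _ measurableSet_Ico, measureReal_def, Real.volume_Ico,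
      ENNReal.toReal_ofReal (by linarith : (0:ℝ) ≤ 0 - x), smul_eq_mul, mul_one,
      abs_of_neg hx]
    ring

lemma integral_hh_mul (x y : ℝ) :
    ∫ q : ℝ × ℝ, hh x q.1 * hh y q.2 ∂(volume : Measure (ℝ × ℝ)) = x * y := by
  rw [Measure.volume_eq_prod, integral_prod_mul, integral_hh, integral_hh]

lemma integral_abs_hh_mul (x y : ℝ) :
    ∫ q : ℝ × ℝ, |hh x q.1 * hh y q.2| ∂(volume : Measure (ℝ × ℝ)) = |x| * |y| := by
  simp_rw [abs_mul]
  rw [Measure.volume_eq_prod,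
    integral_prod_mul (f := fun s => |hh x s|) (g := fun t => |hh y t|),
    integral_abs_hh, integral_abs_hh]

lemma coupling_sq_fst {P : Measure ℝ} {μ : Measure (ℝ × ℝ)}
    (hfst : μ.map Prod.fst = P) (hP : Integrable (fun x : ℝ => x ^ 2) P) :
    Integrable (fun p : ℝ × ℝ => p.1 ^ 2) μ := by
  rw [← hfst] at hP
  exact (integrable_map_measure ((measurable_id.pow_const 2).aestronglyMeasurable)
    measurable_fst.aemeasurable).1 hP

lemma coupling_sq_snd {Q : Measure ℝ} {μ : Measure (ℝ × ℝ)}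
    (hsnd : μ.map Prod.snd = Q) (hQ : Integrable (fun x : ℝ => x ^ 2) Q) :
    Integrable (fun p : ℝ × ℝ => p.2 ^ 2) μ := by
  rw [← hsnd] at hQ
  exact (integrable_map_measure ((measurable_id.pow_const 2).aestronglyMeasurable)
    measurable_snd.aemeasurable).1 hQ

lemma coupling_integrable_mul {μ : Measure (ℝ × ℝ)}
    (h1 : Integrable (fun p : ℝ × ℝ => p.1 ^ 2) μ)
    (h2 : Integrable (fun p : ℝ × ℝ => p.2 ^ 2) μ) :
    Integrable (fun p : ℝ × ℝ => p.1 * p.2) μ := by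
  refine Integrable.mono' ((h1.add h2).div_const 2)
    ((measurable_fst.mul measurable_snd).aestronglyMeasurable)
    (Eventually.of_forall fun p => ?_)
  rw [Real.norm_eq_abs, abs_mul]
  simp only [Pi.add_apply]
  nlinarith [sq_abs p.1, sq_abs p.2, sq_nonneg (|p.1| - |p.2|)]

lemma coupling_integrable_abs_mul {μ : Measure (ℝ × ℝ)}
    (h1 : Integrable (fun p : ℝ × ℝ => p.1 ^ 2) μ)
    (h2 : Integrable (fun p : ℝ × ℝ => p.2 ^ 2) μ) :
    Integrable (fun p : ℝ × ℝ => |p.1| * |p.2|) μ := by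
  refine Integrable.mono' ((h1.add h2).div_const 2)
    ((measurable_fst.abs.mul measurable_snd.abs).aestronglyMeasurable)
    (Eventually.of_forall fun p => ?_)
  rw [Real.norm_eq_abs, abs_of_nonneg (mul_nonneg (abs_nonneg _) (abs_nonneg _))]
  simp only [Pi.add_apply]
  nlinarith [sq_abs p.1, sq_abs p.2, sq_nonneg (|p.1| - |p.2|)]

lemma integrable_Phi {μ : Measure (ℝ × ℝ)} [IsProbabilityMeasure μ]
    (h1 : Integrable (fun p : ℝ × ℝ => p.1 ^ 2) μ)
    (h2 : Integrable (fun p : ℝ × ℝ => p.2 ^ 2) μ) :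
    Integrable (fun z : (ℝ × ℝ) × (ℝ × ℝ) => hh z.1.1 z.2.1 * hh z.1.2 z.2.2)
      (μ.prod (volume : Measure (ℝ × ℝ))) := by
  have hmeas : Measurable (fun z : (ℝ × ℝ) × (ℝ × ℝ) => hh z.1.1 z.2.1 * hh z.1.2 z.2.2) :=
    (hh_meas.comp ((measurable_fst.fst).prodMk (measurable_snd.fst))).mul
      (hh_meas.comp ((measurable_fst.snd).prodMk (measurable_snd.snd)))
  rw [integrable_prod_iff hmeas.aestronglyMeasurable]
  refine ⟨Eventually.of_forall fun p => ?_, ?_⟩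
  · rw [Measure.volume_eq_prod]
    exact (integrable_hh p.1).mul_prod (integrable_hh p.2)
  · have heq : (fun p : ℝ × ℝ => ∫ q : ℝ × ℝ, ‖hh p.1 q.1 * hh p.2 q.2‖ ∂volume)
        = fun p : ℝ × ℝ => |p.1| * |p.2| := by
      funext p
      simp_rw [Real.norm_eq_abs]
      exact integral_abs_hh_mul p.1 p.2
    rw [heq]
    exact coupling_integrable_abs_mul h1 h2

lemma key_identity {μ : Measure (ℝ × ℝ)} [IsProbabilityMeasure μ]
    (h1 : Integrable (fun p : ℝ × ℝ => p.1 ^ 2) μ)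
    (h2 : Integrable (fun p : ℝ × ℝ => p.2 ^ 2) μ) :
    ∫ p : ℝ × ℝ, p.1 * p.2 ∂μ
      = ∫ q : ℝ × ℝ, (∫ p : ℝ × ℝ, hh p.1 q.1 * hh p.2 q.2 ∂μ) ∂(volume : Measure (ℝ × ℝ)) := by
  have h := integral_integral_swap
    (f := fun (p : ℝ × ℝ) (q : ℝ × ℝ) => hh p.1 q.1 * hh p.2 q.2) (integrable_Phi h1 h2)
  rw [← h]
  refine integral_congr_ae (Eventually.of_forall fun p => ?_)
  exact (integral_hh_mul p.1 p.2).symm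

lemma integral_hh_expand (μ : Measure (ℝ × ℝ)) [IsProbabilityMeasure μ] (s t : ℝ) :
    ∫ p : ℝ × ℝ, hh p.1 s * hh p.2 t ∂μ
      = (μ {p : ℝ × ℝ | s < p.1 ∧ t < p.2}).toReal
        - (if t < 0 then (1:ℝ) else 0) * (μ {p : ℝ × ℝ | s < p.1}).toReal
        - (if s < 0 then (1:ℝ) else 0) * (μ {p : ℝ × ℝ | t < p.2}).toReal
        + (if s < 0 then (1:ℝ) else 0) * (if t < 0 then (1:ℝ) else 0) := by
  set b := (if s < 0 then (1:ℝ) else 0) with hb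
  set d := (if t < 0 then (1:ℝ) else 0) with hd
  have hA : MeasurableSet {p : ℝ × ℝ | s < p.1} := measurable_fst measurableSet_Ioi
  have hB : MeasurableSet {p : ℝ × ℝ | t < p.2} := measurable_snd measurableSet_Ioi
  have hAB : MeasurableSet {p : ℝ × ℝ | s < p.1 ∧ t < p.2} := hA.inter hB
  have hpt : ∀ p : ℝ × ℝ, hh p.1 s * hh p.2 t
      = {p : ℝ × ℝ | s < p.1 ∧ t < p.2}.indicator (fun _ => (1:ℝ)) p
        - d * {p : ℝ × ℝ | s < p.1}.indicator (fun _ => (1:ℝ)) p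
        - b * {p : ℝ × ℝ | t < p.2}.indicator (fun _ => (1:ℝ)) p + b * d := by
    intro p
    simp only [hh, indicator_apply, mem_setOf_eq, hb, hd]
    by_cases h1 : s < p.1 <;> by_cases h2 : t < p.2 <;> by_cases hs : s < 0 <;>
      by_cases ht : t < 0 <;> simp [h1, h2, hs, ht] <;> ring
  have hi1 : Integrable ({p : ℝ × ℝ | s < p.1 ∧ t < p.2}.indicator (fun _ => (1:ℝ))) μ := by
    rw [integrable_indicator_iff hAB]
    exact integrableOn_const (ne_of_lt (measure_lt_top μ _))
  have hi2 : Integrable ({p : ℝ × ℝ | s < p.1}.indicator (fun _ => (1:ℝ))) μ := by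
    rw [integrable_indicator_iff hA]
    exact integrableOn_const (ne_of_lt (measure_lt_top μ _))
  have hi3 : Integrable ({p : ℝ × ℝ | t < p.2}.indicator (fun _ => (1:ℝ))) μ := by
    rw [integrable_indicator_iff hB]
    exact integrableOn_const (ne_of_lt (measure_lt_top μ _))
  have hint2 : Integrable (fun p : ℝ × ℝ =>
      {p : ℝ × ℝ | s < p.1 ∧ t < p.2}.indicator (fun _ => (1:ℝ)) p
        - d * {p : ℝ × ℝ | s < p.1}.indicator (fun _ => (1:ℝ)) p) μ :=
    hi1.sub (hi2.const_mul d)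
  have hint3 : Integrable (fun p : ℝ × ℝ =>
      {p : ℝ × ℝ | s < p.1 ∧ t < p.2}.indicator (fun _ => (1:ℝ)) p
        - d * {p : ℝ × ℝ | s < p.1}.indicator (fun _ => (1:ℝ)) p
        - b * {p : ℝ × ℝ | t < p.2}.indicator (fun _ => (1:ℝ)) p) μ :=
    hint2.sub (hi3.const_mul b)
  rw [integral_congr_ae (Eventually.of_forall hpt)]
  rw [integral_add hint3 (integrable_const _), integral_sub hint2 (hi3.const_mul b),
    integral_sub hi1 (hi2.const_mul d), integral_const_mul, integral_const_mul,
    integral_const, integral_indicator_const _ hAB, integral_indicator_const _ hA,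
    integral_indicator_const _ hB, probReal_univ]
  simp [measureReal_def]

lemma toReal_Ioi (P : Measure ℝ) [IsProbabilityMeasure P] (s : ℝ) :
    (P (Ioi s)).toReal = 1 - cdf P s := by
  rw [← compl_Iic, prob_compl_eq_one_sub measurableSet_Iic,
    ENNReal.toReal_sub_of_le prob_le_one ENNReal.one_ne_top, ENNReal.toReal_one, cdf_eq_real, measureReal_def]

lemma coupling_fst_apply {P : Measure ℝ} {μ : Measure (ℝ × ℝ)} (hfst : μ.map Prod.fst = P)
    (s : ℝ) : μ {p : ℝ × ℝ | s < p.1} = P (Ioi s) := by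
  rw [← hfst, Measure.map_apply measurable_fst measurableSet_Ioi]
  rfl

lemma coupling_snd_apply {Q : Measure ℝ} {μ : Measure (ℝ × ℝ)} (hsnd : μ.map Prod.snd = Q)
    (t : ℝ) : μ {p : ℝ × ℝ | t < p.2} = Q (Ioi t) := by
  rw [← hsnd, Measure.map_apply measurable_snd measurableSet_Ioi]
  rfl

lemma quadrant_toReal_le {P Q : Measure ℝ} [IsProbabilityMeasure P] [IsProbabilityMeasure Q]
    {μ : Measure (ℝ × ℝ)} [IsProbabilityMeasure μ]
    (hfst : μ.map Prod.fst = P) (hsnd : μ.map Prod.snd = Q) (s t : ℝ) :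
    (μ {p : ℝ × ℝ | s < p.1 ∧ t < p.2}).toReal ≤ 1 - max (cdf P s) (cdf Q t) := by
  rcases le_total (cdf P s) (cdf Q t) with h | h
  · rw [max_eq_right h, ← toReal_Ioi Q t, ← coupling_snd_apply hsnd t]
    exact ENNReal.toReal_mono (measure_ne_top μ _) (measure_mono fun p hp => hp.2)
  · rw [max_eq_left h, ← toReal_Ioi P s, ← coupling_fst_apply hfst s]
    exact ENNReal.toReal_mono (measure_ne_top μ _) (measure_mono fun p hp => hp.1)

lemma integral_mul_le (P Q : Measure ℝ) [IsProbabilityMeasure P] [IsProbabilityMeasure Q]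
    (hP : Integrable (fun x : ℝ => x ^ 2) P) (hQ : Integrable (fun y : ℝ => y ^ 2) Q)
    {μ : Measure (ℝ × ℝ)} [IsProbabilityMeasure μ]
    (hfst : μ.map Prod.fst = P) (hsnd : μ.map Prod.snd = Q) :
    ∫ p : ℝ × ℝ, p.1 * p.2 ∂μ
      ≤ ∫ p : ℝ × ℝ, p.1 * p.2
          ∂((volume.restrict (Ioo (0:ℝ) 1)).map (fun u => (qf P u, qf Q u))) := by
  set ν := (volume.restrict (Ioo (0:ℝ) 1)).map (fun u => (qf P u, qf Q u)) with hν
  haveI : IsProbabilityMeasure ν := muPlus_prob P Q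
  have hν1 : ν.map Prod.fst = P := muPlus_fst P Q
  have hν2 : ν.map Prod.snd = Q := muPlus_snd P Q
  have h1 := coupling_sq_fst hfst hP
  have h2 := coupling_sq_snd hsnd hQ
  have h1' := coupling_sq_fst hν1 hP
  have h2' := coupling_sq_snd hν2 hQ
  rw [key_identity h1 h2, key_identity h1' h2']
  refine integral_mono (μ := (volume : Measure (ℝ × ℝ)))
    ((integrable_Phi h1 h2).integral_prod_right)
    ((integrable_Phi h1' h2').integral_prod_right) fun q => ?_
  simp only
  rw [integral_hh_expand μ q.1 q.2, integral_hh_expand ν q.1 q.2,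
    coupling_fst_apply hfst, coupling_fst_apply hν1,
    coupling_snd_apply hsnd, coupling_snd_apply hν2]
  have hquad : (ν {p : ℝ × ℝ | q.1 < p.1 ∧ q.2 < p.2}).toReal
      = 1 - max (cdf P q.1) (cdf Q q.2) := by
    rw [hν, muPlus_quadrant, ENNReal.toReal_ofReal]
    have h1m := max_le (cdf_le_one (μ := P) q.1) (cdf_le_one (μ := Q) q.2)
    linarith
  have hle := quadrant_toReal_le hfst hsnd q.1 q.2
  rw [hquad]
  linarith [hle]

/-- `μ` is a coupling of `P` and `Q`. -/
def IsCoupling (P Q : Measure ℝ) (μ : Measure (ℝ × ℝ)) : Prop :=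
  IsProbabilityMeasure μ ∧ μ.map Prod.fst = P ∧ μ.map Prod.snd = Q

theorem stmt_15 (P Q : Measure ℝ) [IsProbabilityMeasure P] [IsProbabilityMeasure Q]
    (hP : Integrable (fun x : ℝ => x ^ 2) P)
    (hQ : Integrable (fun y : ℝ => y ^ 2) Q)
    (F G : ℝ → ℝ)
    (hF : ∀ x : ℝ, F x = (P (Set.Iic x)).toReal)
    (hG : ∀ y : ℝ, G y = (Q (Set.Iic y)).toReal)
    (Finv Ginv : ℝ → ℝ)
    (hFinv : ∀ ξ : ℝ, Finv ξ = sInf {x : ℝ | ξ ≤ F x})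
    (hGinv : ∀ ξ : ℝ, Ginv ξ = sInf {y : ℝ | ξ ≤ G y})
    (μPlus : Measure (ℝ × ℝ))
    (hμPlus : μPlus =
      (volume.restrict (Set.Ioo (0 : ℝ) 1)).map (fun u => (Finv u, Ginv u))) :
    IsCoupling P Q μPlus ∧
    (∫ p, p.1 * p.2 ∂μPlus) =
      sSup {r : ℝ | ∃ μ : Measure (ℝ × ℝ), IsCoupling P Q μ ∧
        r = ∫ p, p.1 * p.2 ∂μ} := by

  have hFinv' : Finv = qf P := by
    funext ξ
    rw [hFinv, qf]
    congr 1
    ext x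
    simp only [mem_setOf_eq, hF, cdf_eq_real, measureReal_def]
  have hGinv' : Ginv = qf Q := by
    funext ξ
    rw [hGinv, qf]
    congr 1
    ext y
    simp only [mem_setOf_eq, hG, cdf_eq_real, measureReal_def]
  rw [hFinv', hGinv'] at hμPlus
  have hcoup : IsCoupling P Q μPlus := by
    rw [hμPlus]
    exact ⟨muPlus_prob P Q, muPlus_fst P Q, muPlus_snd P Q⟩
  refine ⟨hcoup, ?_⟩
  set S := {r : ℝ | ∃ μ : Measure (ℝ × ℝ), IsCoupling P Q μ ∧
      r = ∫ p, p.1 * p.2 ∂μ} with hS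
  have hub : ∀ r ∈ S, r ≤ ∫ p : ℝ × ℝ, p.1 * p.2 ∂μPlus := by
    rintro r ⟨μ, ⟨hprob, hfst, hsnd⟩, rfl⟩
    haveI := hprob
    rw [hμPlus]
    exact integral_mul_le P Q hP hQ hfst hsnd
  have hmem : (∫ p : ℝ × ℝ, p.1 * p.2 ∂μPlus) ∈ S := ⟨μPlus, hcoup, rfl⟩
  exact le_antisymm (le_csSup ⟨_, hub⟩ hmem) (csSup_le ⟨_, hmem⟩ hub)
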